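/- arXiv:2101.07777 — 7 statements merged into one kernel-verified Lean document; each statement's English description precedes it below -/
import Mathlib

section
/- Let C be a symmetric monoidal category equipped with, for every object x, morphisms ∇_x : x ⊗ x ⟶ x and u_x : 𝟙_C ⟶ x such that: (i) every (x, ∇_x, u_x) is a commutative monoid object in C; (ii) ∇ and u are natural, i.e. for every f : x ⟶ y one has (f ⊗ f) ≫ ∇_y = ∇_x ≫ f and u_x ≫ f = u_y; (iii) ∇ and u are monoidal, i.e. ∇_{x⊗y} = tensorμ x y x y ≫ (∇_x ⊗ ∇_y) for all x, y, and u_{𝟙} = 𝟙_{𝟙_C}. Then the monoidal structure of C is cocartesian: the unit object 𝟙_C is initial, and for all objects x, y the cofan with legs (ρ_x).inv ≫ (𝟙_x ⊗ u_y) : x ⟶ x ⊗ y and (λ_y).inv ≫ (u_x ⊗ 𝟙_y) : y ⟶ x ⊗ y exhibits x ⊗ y as a binary coproduct of x and y. -/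
open CategoryTheory MonoidalCategory Limits

/-- If a symmetric monoidal category `C` is equipped with a natural, monoidal family of
commutative monoid structures `(∇ x : x ⊗ x ⟶ x, u x : 𝟙_ C ⟶ x)` on every object `x`, then the
monoidal structure of `C` is cocartesian: the unit object is initial and, for all objects
`x, y`, the cofan with legs `(ρ_ x).inv ≫ (𝟙 x ⊗ u y)` and `(λ_ y).inv ≫ (u x ⊗ 𝟙 y)` exhibits
`x ⊗ y` as a binary coproduct of `x` and `y`. -/
theorem cocartesian_of_natural_monoid_structures {C : Type*} [Category C] [MonoidalCategory C]
    [SymmetricCategory C]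
    (m : ∀ x : C, x ⊗ x ⟶ x) (u : ∀ x : C, 𝟙_ C ⟶ x)
    (h_assoc : ∀ x : C, (m x ⊗ₘ 𝟙 x) ≫ m x = (α_ x x x).hom ≫ (𝟙 x ⊗ₘ m x) ≫ m x)
    (h_left_unit : ∀ x : C, (u x ⊗ₘ 𝟙 x) ≫ m x = (λ_ x).hom)
    (h_right_unit : ∀ x : C, (𝟙 x ⊗ₘ u x) ≫ m x = (ρ_ x).hom)
    (h_comm : ∀ x : C, (β_ x x).hom ≫ m x = m x)
    (h_nat_m : ∀ {x y : C} (f : x ⟶ y), (f ⊗ₘ f) ≫ m y = m x ≫ f)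
    (h_nat_u : ∀ {x y : C} (f : x ⟶ y), u x ≫ f = u y)
    (h_mon_m : ∀ x y : C, m (x ⊗ y) = tensorμ x y x y ≫ (m x ⊗ₘ m y))
    (h_mon_u : u (𝟙_ C) = 𝟙 (𝟙_ C)) :
    Nonempty (IsInitial (𝟙_ C)) ∧
      ∀ x y : C, Nonempty (IsColimit (BinaryCofan.mk
        ((ρ_ x).inv ≫ (𝟙 x ⊗ₘ u y)) ((λ_ y).inv ≫ (u x ⊗ₘ 𝟙 y)))) := by
  constructor
  · exact ⟨IsInitial.ofUniqueHom (fun x => u x) (fun x f => by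
      rw [← Category.id_comp f, ← h_mon_u, h_nat_u f])⟩
  · intro x y
    set inl : x ⟶ x ⊗ y := (ρ_ x).inv ≫ (𝟙 x ⊗ₘ u y) with hinl
    set inr : y ⟶ x ⊗ y := (λ_ y).inv ≫ (u x ⊗ₘ 𝟙 y) with hinr
    have fac₁ : ∀ {z : C} (f : x ⟶ z) (g : y ⟶ z), inl ≫ (f ⊗ₘ g) ≫ m z = f := by
      intro z f g
      rw [hinl, Category.assoc, tensorHom_comp_tensorHom_assoc, Category.id_comp, h_nat_u g]
      rw [show f ⊗ₘ u z = (f ⊗ₘ 𝟙 (𝟙_ C)) ≫ (𝟙 z ⊗ₘ u z) from by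
        rw [tensorHom_comp_tensorHom, Category.comp_id, Category.id_comp], Category.assoc, h_right_unit]
      simp
    have fac₂ : ∀ {z : C} (f : x ⟶ z) (g : y ⟶ z), inr ≫ (f ⊗ₘ g) ≫ m z = g := by
      intro z f g
      rw [hinr, Category.assoc, tensorHom_comp_tensorHom_assoc, Category.id_comp, h_nat_u f]
      rw [show u z ⊗ₘ g = (𝟙 (𝟙_ C) ⊗ₘ g) ≫ (u z ⊗ₘ 𝟙 z) from by
        rw [tensorHom_comp_tensorHom, Category.comp_id, Category.id_comp], Category.assoc, h_left_unit]
      simp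
    have key : (inl ⊗ₘ inr) ≫ m (x ⊗ y) = 𝟙 (x ⊗ y) := by
      rw [h_mon_m, hinl, hinr, ← tensorHom_comp_tensorHom,
        Category.assoc, tensorμ_natural_assoc (𝟙 x) (u y) (u x) (𝟙 y),
        tensorHom_comp_tensorHom, h_right_unit, h_left_unit]
      rw [tensorμ]
      simp only [braiding_tensorUnit_left]
      coherence
    refine ⟨BinaryCofan.isColimitMk
      (fun s => (s.inl ⊗ₘ s.inr) ≫ m s.pt)
      (fun s => fac₁ s.inl s.inr) (fun s => fac₂ s.inl s.inr) ?_⟩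
    intro s t h₁ h₂
    rw [← h₁, ← h₂, ← tensorHom_comp_tensorHom, Category.assoc, h_nat_m t, ← Category.assoc, key,
      Category.id_comp]
end

section
/- Let C be a symmetric monoidal category equipped with, for every object x, morphisms Δ_x : x ⟶ x ⊗ x and e_x : x ⟶ 𝟙_C such that: (i) every (x, Δ_x, e_x) is a cocommutative comonoid object in C; (ii) Δ and e are natural, i.e. for every f : x ⟶ y one has Δ_x ≫ (f ⊗ f) = f ≫ Δ_y and f ≫ e_y = e_x; (iii) Δ and e are monoidal, i.e. Δ_{x⊗y} = (Δ_x ⊗ Δ_y) ≫ tensorμ x x y y for all x, y, and e_{𝟙} = 𝟙_{𝟙_C}. Then the monoidal structure of C is cartesian: the unit object 𝟙_C is terminal, and for all objects x, y the fan with legs (𝟙_x ⊗ e_y) ≫ (ρ_x).hom : x ⊗ y ⟶ x and (e_x ⊗ 𝟙_y) ≫ (λ_y).hom : x ⊗ y ⟶ y exhibits x ⊗ y as a binary product of x and y. -/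
open CategoryTheory MonoidalCategory Limits

lemma tensorμ_counits {C : Type*} [Category C] [MonoidalCategory C] [SymmetricCategory C]
    (x y : C) :
    tensorμ x (𝟙_ C) (𝟙_ C) y ≫ ((ρ_ x).hom ⊗ₘ (λ_ y).hom) = ((ρ_ x).hom ⊗ₘ (λ_ y).hom) := by
  dsimp [tensorμ]
  rw [braiding_tensorUnit_left]
  monoidal

/-- If a symmetric monoidal category `C` is equipped with a natural, monoidal family of
cocommutative comonoid structures `(Δ x : x ⟶ x ⊗ x, e x : x ⟶ 𝟙_ C)` on every object `x`, then
the monoidal structure of `C` is cartesian: the unit object is terminal and, for all objects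
`x, y`, the fan with legs `(𝟙 x ⊗ₘ e y) ≫ (ρ_ x).hom` and `(e x ⊗ₘ 𝟙 y) ≫ (λ_ y).hom` exhibits
`x ⊗ₘ y` as a binary product of `x` and `y`. -/
theorem cartesian_of_natural_comonoid_structures {C : Type*} [Category C] [MonoidalCategory C]
    [SymmetricCategory C]
    (d : ∀ x : C, x ⟶ x ⊗ x) (e : ∀ x : C, x ⟶ 𝟙_ C)
    (h_coassoc : ∀ x : C, d x ≫ (d x ⊗ₘ 𝟙 x) ≫ (α_ x x x).hom = d x ≫ (𝟙 x ⊗ₘ d x))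
    (h_left_counit : ∀ x : C, d x ≫ (e x ⊗ₘ 𝟙 x) = (λ_ x).inv)
    (h_right_counit : ∀ x : C, d x ≫ (𝟙 x ⊗ₘ e x) = (ρ_ x).inv)
    (h_cocomm : ∀ x : C, d x ≫ (β_ x x).hom = d x)
    (h_nat_d : ∀ {x y : C} (f : x ⟶ y), d x ≫ (f ⊗ₘ f) = f ≫ d y)
    (h_nat_e : ∀ {x y : C} (f : x ⟶ y), f ≫ e y = e x)
    (h_mon_d : ∀ x y : C, d (x ⊗ y) = (d x ⊗ₘ d y) ≫ tensorμ x x y y)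
    (h_mon_e : e (𝟙_ C) = 𝟙 (𝟙_ C)) :
    Nonempty (IsTerminal (𝟙_ C)) ∧
      ∀ x y : C, Nonempty (IsLimit (BinaryFan.mk
        ((𝟙 x ⊗ₘ e y) ≫ (ρ_ x).hom) ((e x ⊗ₘ 𝟙 y) ≫ (λ_ y).hom))) := by
  have e_uniq : ∀ {x : C} (f : x ⟶ 𝟙_ C), f = e x := fun {x} f => by
    rw [← h_nat_e f, h_mon_e, Category.comp_id]
  constructor
  · exact ⟨IsTerminal.ofUniqueHom (fun x => e x) fun x f => e_uniq f⟩
  · intro x y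
    -- the key comultiplication-counit identity
    have key : d (x ⊗ y) ≫ (((𝟙 x ⊗ₘ e y) ≫ (ρ_ x).hom) ⊗ₘ ((e x ⊗ₘ 𝟙 y) ≫ (λ_ y).hom)) =
        𝟙 (x ⊗ y) := by
      rw [h_mon_d, Category.assoc, ← tensorHom_comp_tensorHom,
        ← tensorμ_natural_assoc (𝟙 x) (e x) (e y) (𝟙 y), tensorμ_counits,
        tensorHom_comp_tensorHom_assoc, h_right_counit, h_left_counit, tensorHom_comp_tensorHom,
        Iso.inv_hom_id, Iso.inv_hom_id, id_tensorHom_id]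
    have fac1 : ∀ {z : C} (f : z ⟶ x) (g : z ⟶ y),
        (d z ≫ (f ⊗ₘ g)) ≫ (𝟙 x ⊗ₘ e y) ≫ (ρ_ x).hom = f := by
      intro z f g
      have h1 : (f ⊗ₘ g) ≫ (𝟙 x ⊗ₘ e y) = (𝟙 z ⊗ₘ e z) ≫ (f ⊗ₘ 𝟙 (𝟙_ C)) := by
        rw [tensorHom_comp_tensorHom, tensorHom_comp_tensorHom, Category.comp_id, Category.id_comp, Category.comp_id,
          h_nat_e g]
      rw [Category.assoc]
      slice_lhs 2 3 => rw [h1]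
      slice_lhs 1 2 => rw [h_right_counit]
      simp
    have fac2 : ∀ {z : C} (f : z ⟶ x) (g : z ⟶ y),
        (d z ≫ (f ⊗ₘ g)) ≫ (e x ⊗ₘ 𝟙 y) ≫ (λ_ y).hom = g := by
      intro z f g
      have h1 : (f ⊗ₘ g) ≫ (e x ⊗ₘ 𝟙 y) = (e z ⊗ₘ 𝟙 z) ≫ (𝟙 (𝟙_ C) ⊗ₘ g) := by
        rw [tensorHom_comp_tensorHom, tensorHom_comp_tensorHom, Category.comp_id, Category.id_comp, Category.comp_id,
          h_nat_e f]
      rw [Category.assoc]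
      slice_lhs 2 3 => rw [h1]
      slice_lhs 1 2 => rw [h_left_counit]
      simp
    have unq : ∀ {z : C} (f : z ⟶ x) (g : z ⟶ y) (m : z ⟶ x ⊗ y),
        m ≫ (𝟙 x ⊗ₘ e y) ≫ (ρ_ x).hom = f → m ≫ (e x ⊗ₘ 𝟙 y) ≫ (λ_ y).hom = g →
        m = d z ≫ (f ⊗ₘ g) := by
      intro z f g m h₁ h₂
      calc m = m ≫ 𝟙 (x ⊗ y) := (Category.comp_id m).symm
        _ = m ≫ d (x ⊗ y) ≫ (((𝟙 x ⊗ₘ e y) ≫ (ρ_ x).hom) ⊗ₘ ((e x ⊗ₘ 𝟙 y) ≫ (λ_ y).hom)) := by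
            rw [key]
        _ = (m ≫ d (x ⊗ y)) ≫ (((𝟙 x ⊗ₘ e y) ≫ (ρ_ x).hom) ⊗ₘ ((e x ⊗ₘ 𝟙 y) ≫ (λ_ y).hom)) := by
            rw [Category.assoc]
        _ = (d z ≫ (m ⊗ₘ m)) ≫ (((𝟙 x ⊗ₘ e y) ≫ (ρ_ x).hom) ⊗ₘ ((e x ⊗ₘ 𝟙 y) ≫ (λ_ y).hom)) := by
            rw [h_nat_d m]
        _ = d z ≫ ((m ≫ (𝟙 x ⊗ₘ e y) ≫ (ρ_ x).hom) ⊗ₘ (m ≫ (e x ⊗ₘ 𝟙 y) ≫ (λ_ y).hom)) := by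
            rw [Category.assoc, tensorHom_comp_tensorHom]
        _ = d z ≫ (f ⊗ₘ g) := by rw [h₁, h₂]
    exact ⟨BinaryFan.isLimitMk (fun s => d s.pt ≫ (s.fst ⊗ₘ s.snd))
      (fun s => fac1 s.fst s.snd) (fun s => fac2 s.fst s.snd)
      (fun s m h₁ h₂ => unq s.fst s.snd m h₁ h₂)⟩
end

section
/- Let X be a category with finite coproducts, regarded as a monoidal category under binary coproduct with unit the initial object, and let F : X ⥤ Cat be a functor equipped with a lax monoidal structure (with Cat carrying its cartesian monoidal structure). Then the induced tensor product on each fibre is strictly associative: for every object x of X and all objects a, b, c of F(x), (a ⊗ₓ b) ⊗ₓ c = a ⊗ₓ (b ⊗ₓ c). -/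
open CategoryTheory CategoryTheory.Limits

universe w z v u

variable {X : Type u} [Category.{v} X] [HasFiniteCoproducts X]

/-- A lax monoidal structure on a functor `F : X ⥤ Cat`, where `X` carries the cocartesian
monoidal structure given by binary coproducts with unit an initial object, and `Cat` carries
its cartesian monoidal structure.  It consists of laxator functors
`μ x y : F(x) × F(y) ⥤ F(x ⨿ y)`, natural in `x` and `y`, and a unit functor
`ε : 𝟙_Cat ⥤ F(⊥)` from the terminal category, satisfying the lax associativity and unit
axioms. -/
structure CoprodLaxMonoidalStructure (F : X ⥤ Cat.{w, z}) where
  /-- The laxator. -/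
  μ : ∀ x y : X, (↑(F.obj x) × ↑(F.obj y)) ⥤ ↑(F.obj (x ⨿ y))
  /-- The unit laxator, a functor from the terminal category. -/
  ε : Discrete PUnit.{1} ⥤ ↑(F.obj (⊥_ X))
  /-- Naturality of the laxator in both variables. -/
  naturality : ∀ {x x' y y' : X} (f : x ⟶ x') (g : y ⟶ y'),
    (F.map f).toFunctor.prod (F.map g).toFunctor ⋙ μ x' y' = μ x y ⋙ (F.map (coprod.map f g)).toFunctor
  /-- The lax associativity axiom. -/
  associativity : ∀ x y z : X,
    (μ x y).prod (𝟭 ↑(F.obj z)) ⋙ μ (x ⨿ y) z ⋙ (F.map (coprod.associator x y z).hom).toFunctor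
      = prod.associator ↑(F.obj x) ↑(F.obj y) ↑(F.obj z) ⋙
          (𝟭 ↑(F.obj x)).prod (μ y z) ⋙ μ x (y ⨿ z)
  /-- The lax left unit axiom. -/
  left_unitality : ∀ x : X,
    Prod.sectR (ε.obj ⟨PUnit.unit⟩) ↑(F.obj x) ⋙ μ (⊥_ X) x ⋙
        (F.map (coprod.desc (initial.to x) (𝟙 x))).toFunctor
      = 𝟭 ↑(F.obj x)
  /-- The lax right unit axiom. -/
  right_unitality : ∀ x : X,
    Prod.sectL ↑(F.obj x) (ε.obj ⟨PUnit.unit⟩) ⋙ μ x (⊥_ X) ⋙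
        (F.map (coprod.desc (𝟙 x) (initial.to x))).toFunctor
      = 𝟭 ↑(F.obj x)

/-- The fibrewise tensor product induced on the fibre `F(x)` by a lax monoidal structure on
`F : X ⥤ Cat`:  `a ⊗ₓ b = F(∇_x)(μ x x (a, b))`, where `∇_x : x ⨿ x ⟶ x` is the codiagonal. -/
noncomputable def fibTensor (F : X ⥤ Cat.{w, z}) (L : CoprodLaxMonoidalStructure F) {x : X}
    (a b : ↑(F.obj x)) : ↑(F.obj x) :=
  (F.map (codiag x)).toFunctor.obj ((L.μ x x).obj (a, b))

/-- The fibrewise unit induced on the fibre `F(x)` by a lax monoidal structure on `F : X ⥤ Cat`: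
`I_x = F(i_x)(ε(⋆))`, where `i_x : ⊥ ⟶ x` is the unique map from the initial object. -/
noncomputable def fibUnit (F : X ⥤ Cat.{w, z}) (L : CoprodLaxMonoidalStructure F) (x : X) : ↑(F.obj x) :=
  (F.map (initial.to x)).toFunctor.obj (L.ε.obj ⟨PUnit.unit⟩)

/-- **Strict associativity of the fibrewise tensor product.**
For a functor `F : X ⥤ Cat` from a category with finite coproducts, equipped with a lax
monoidal structure with respect to the cocartesian monoidal structure on `X` and the cartesian
monoidal structure on `Cat`, the induced tensor product on each fibre is strictly associative:
`(a ⊗ₓ b) ⊗ₓ c = a ⊗ₓ (b ⊗ₓ c)`. -/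
theorem fibTensor_assoc (F : X ⥤ Cat.{w, z}) (L : CoprodLaxMonoidalStructure F) (x : X)
    (a b c : ↑(F.obj x)) :
    fibTensor F L (fibTensor F L a b) c = fibTensor F L a (fibTensor F L b c) := by
  have h1 := Functor.congr_obj (L.naturality (codiag x) (𝟙 x)) ((L.μ x x).obj (a, b), c)
  have h2 := Functor.congr_obj (L.naturality (𝟙 x) (codiag x)) (a, (L.μ x x).obj (b, c))
  have h3 := Functor.congr_obj (L.associativity x x x) ((a, b), c)
  simp only [Functor.comp_obj, Functor.prod_obj, Functor.id_obj, CategoryTheory.Functor.map_id,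
    Cat.Hom.id_obj, prod.associator_obj] at h1 h2 h3
  have key : coprod.map (codiag x) (𝟙 x) ≫ codiag x
      = (coprod.associator x x x).hom ≫ coprod.map (𝟙 x) (codiag x) ≫ codiag x := by
    ext <;> simp only [coprod.inl_desc, coprod.inr_desc, coprod.associator_hom, coprod.inl_map_assoc, coprod.inr_map_assoc, Category.assoc, Category.id_comp, coprod.desc_comp, codiag]
  calc fibTensor F L (fibTensor F L a b) c
      = (F.map (codiag x)).toFunctor.obj ((F.map (coprod.map (codiag x) (𝟙 x))).toFunctor.obj
          ((L.μ (x ⨿ x) x).obj ((L.μ x x).obj (a, b), c))) := by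
        simp only [fibTensor]
        rw [h1]
    _ = (F.map (coprod.map (codiag x) (𝟙 x) ≫ codiag x)).toFunctor.obj
          ((L.μ (x ⨿ x) x).obj ((L.μ x x).obj (a, b), c)) := by
        rw [F.map_comp]; rfl
    _ = (F.map ((coprod.associator x x x).hom ≫ coprod.map (𝟙 x) (codiag x) ≫ codiag x)).toFunctor.obj
          ((L.μ (x ⨿ x) x).obj ((L.μ x x).obj (a, b), c)) := by rw [key]
    _ = (F.map (coprod.map (𝟙 x) (codiag x) ≫ codiag x)).toFunctor.obj
          ((F.map (coprod.associator x x x).hom).toFunctor.obj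
            ((L.μ (x ⨿ x) x).obj ((L.μ x x).obj (a, b), c))) := by
        rw [F.map_comp]; rfl
    _ = (F.map (coprod.map (𝟙 x) (codiag x) ≫ codiag x)).toFunctor.obj
          ((L.μ x (x ⨿ x)).obj (a, (L.μ x x).obj (b, c))) := by rw [h3]
    _ = (F.map (codiag x)).toFunctor.obj ((F.map (coprod.map (𝟙 x) (codiag x))).toFunctor.obj
          ((L.μ x (x ⨿ x)).obj (a, (L.μ x x).obj (b, c)))) := by
        rw [F.map_comp]; rfl
    _ = fibTensor F L a (fibTensor F L b c) := by
        simp only [fibTensor]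
        rw [← h2]
end

section
/- Let X be a category with finite coproducts, regarded as a monoidal category under binary coproduct with unit the initial object, and let F : X ⥤ Cat be a functor equipped with a lax monoidal structure (with Cat carrying its cartesian monoidal structure). Then the induced tensor product on each fibre is strictly unital: for every object x of X and every object a of F(x), I_x ⊗ₓ a = a and a ⊗ₓ I_x = a. -/
open CategoryTheory CategoryTheory.Limits

universe w z v u

variable {X : Type u} [Category.{v} X] [HasFiniteCoproducts X]

/-- **Strict unitality of the fibrewise tensor product.**
For a functor `F : X ⥤ Cat` from a category with finite coproducts, equipped with a lax
monoidal structure with respect to the cocartesian monoidal structure on `X` and the cartesian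
monoidal structure on `Cat`, the induced tensor product on each fibre is strictly unital:
`I_x ⊗ₓ a = a` and `a ⊗ₓ I_x = a`. -/
theorem fibTensor_unit (F : X ⥤ Cat.{w, z}) (L : CoprodLaxMonoidalStructure F) (x : X)
    (a : ↑(F.obj x)) :
    fibTensor F L (fibUnit F L x) a = a ∧ fibTensor F L a (fibUnit F L x) = a := by
  constructor
  · have hnat := Functor.congr_obj (L.naturality (initial.to x) (𝟙 x))
      (L.ε.obj ⟨PUnit.unit⟩, a)
    have hida : (F.map (𝟙 x)).toFunctor.obj a = a := by rw [F.map_id]; rfl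
    have hcomp : (F.map (coprod.map (initial.to x) (𝟙 x))).toFunctor ⋙ (F.map (codiag x)).toFunctor
        = (F.map (coprod.desc (initial.to x) (𝟙 x))).toFunctor := by
      rw [← Cat.Hom.comp_toFunctor, ← F.map_comp]
      congr 1
      simp [codiag]
    have hunit := Functor.congr_obj (L.left_unitality x) a
    simp only [Functor.comp_obj, Functor.prod_obj, Prod.sectR_obj] at hnat hunit ⊢
    rw [hida] at hnat
    calc (F.map (codiag x)).toFunctor.obj ((L.μ x x).obj ((F.map (initial.to x)).toFunctor.obj (L.ε.obj ⟨PUnit.unit⟩), a))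
        = (F.map (codiag x)).toFunctor.obj ((F.map (coprod.map (initial.to x) (𝟙 x))).toFunctor.obj
            ((L.μ (⊥_ X) x).obj (L.ε.obj ⟨PUnit.unit⟩, a))) := by rw [hnat]
      _ = (F.map (coprod.desc (initial.to x) (𝟙 x))).toFunctor.obj
            ((L.μ (⊥_ X) x).obj (L.ε.obj ⟨PUnit.unit⟩, a)) :=
          Functor.congr_obj hcomp _
      _ = a := hunit
  · have hnat := Functor.congr_obj (L.naturality (𝟙 x) (initial.to x))
      (a, L.ε.obj ⟨PUnit.unit⟩)
    have hida : (F.map (𝟙 x)).toFunctor.obj a = a := by rw [F.map_id]; rfl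
    have hcomp : (F.map (coprod.map (𝟙 x) (initial.to x))).toFunctor ⋙ (F.map (codiag x)).toFunctor
        = (F.map (coprod.desc (𝟙 x) (initial.to x))).toFunctor := by
      rw [← Cat.Hom.comp_toFunctor, ← F.map_comp]
      congr 1
      simp [codiag]
    have hunit := Functor.congr_obj (L.right_unitality x) a
    simp only [Functor.comp_obj, Functor.prod_obj, Prod.sectL_obj] at hnat hunit ⊢
    rw [hida] at hnat
    calc (F.map (codiag x)).toFunctor.obj ((L.μ x x).obj (a, (F.map (initial.to x)).toFunctor.obj (L.ε.obj ⟨PUnit.unit⟩)))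
        = (F.map (codiag x)).toFunctor.obj ((F.map (coprod.map (𝟙 x) (initial.to x))).toFunctor.obj
            ((L.μ x (⊥_ X)).obj (a, L.ε.obj ⟨PUnit.unit⟩))) := by rw [hnat]
      _ = (F.map (coprod.desc (𝟙 x) (initial.to x))).toFunctor.obj
            ((L.μ x (⊥_ X)).obj (a, L.ε.obj ⟨PUnit.unit⟩)) :=
          Functor.congr_obj hcomp _
      _ = a := hunit
end

section
/- Let X be a category with finite coproducts, regarded as a monoidal category under binary coproduct with unit the initial object, and let F : X ⥤ Cat be a functor equipped with a lax monoidal structure (with Cat carrying its cartesian monoidal structure). Then every reindexing functor strictly preserves the fibrewise monoidal structure: for every morphism f : x ⟶ y of X and all objects a, b of F(x), (F.map f).obj (a ⊗ₓ b) = ((F.map f).obj a) ⊗_y ((F.map f).obj b), and (F.map f).obj I_x = I_y. -/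
open CategoryTheory CategoryTheory.Limits

universe w z v u

variable {X : Type u} [Category.{v} X] [HasFiniteCoproducts X]

/-- **Reindexing functors strictly preserve the fibrewise monoidal structure.**
For a functor `F : X ⥤ Cat` from a category with finite coproducts, equipped with a lax
monoidal structure with respect to the cocartesian monoidal structure on `X` and the cartesian
monoidal structure on `Cat`, every reindexing functor `F.map f` strictly preserves the
fibrewise tensor product and unit:
`F(f)(a ⊗ₓ b) = F(f)(a) ⊗_y F(f)(b)` and `F(f)(I_x) = I_y`. -/
theorem fibTensor_map (F : X ⥤ Cat.{w, z}) (L : CoprodLaxMonoidalStructure F) {x y : X}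
    (f : x ⟶ y) (a b : ↑(F.obj x)) :
    (F.map f).toFunctor.obj (fibTensor F L a b)
        = fibTensor F L ((F.map f).toFunctor.obj a) ((F.map f).toFunctor.obj b) ∧
      (F.map f).toFunctor.obj (fibUnit F L x) = fibUnit F L y := by
  constructor
  · have h1 : F.map (codiag x) ≫ F.map f = F.map (coprod.map f f) ≫ F.map (codiag y) := by
      rw [← F.map_comp, ← F.map_comp, coprod.map_codiag]
    have h2 := Functor.congr_obj (L.naturality f f) (a, b)
    simp only [Functor.comp_obj, Functor.prod_obj] at h2
    have h3 := Functor.congr_obj (congrArg Cat.Hom.toFunctor h1) ((L.μ x x).obj (a, b))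
    unfold fibTensor
    rw [show ((F.map f).toFunctor.obj ((F.map (codiag x)).toFunctor.obj ((L.μ x x).obj (a, b)))) =
      (F.map (codiag y)).toFunctor.obj ((F.map (coprod.map f f)).toFunctor.obj ((L.μ x x).obj (a, b))) from h3,
      ← h2]
  · have h1 : F.map (initial.to x) ≫ F.map f = F.map (initial.to y) := by
      rw [← F.map_comp]; congr 1; exact initial.hom_ext _ _
    exact Functor.congr_obj (congrArg Cat.Hom.toFunctor h1) (L.ε.obj ⟨PUnit.unit⟩)
end

section
/- A morphism φ : G ⟶ H in the category of quivers is strongly cartesian with respect to the vertex functor V : Quiv ⥤ Type (i.e. cartesian in the sense of Grothendieck fibrations, lying over its own vertex map) if and only if for all vertices a, b of G, the edge map φ.map : (a ⟶ b) → (φ.obj a ⟶ φ.obj b) is a bijection. -/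
open CategoryTheory Quiver

universe v u

/-- The vertex functor `V : Quiv ⥤ Type`, sending a quiver to its type of vertices and a
prefunctor to its underlying map on vertices. -/
def Quiv.vertexFunctor : Quiv.{v, u} ⥤ Type u where
  obj G := G
  map φ := TypeCat.ofHom φ.obj
  map_id _ := rfl
  map_comp _ _ := rfl

/-- Extensionality for prefunctors with heterogeneous equality on maps. -/
theorem prefunctorExtHEq {V W : Type*} [Quiver V] [Quiver W] {F G : Prefunctor V W}
    (hobj : ∀ x, F.obj x = G.obj x)
    (hmap : ∀ (x y : V) (e : x ⟶ y), HEq (F.map e) (G.map e)) : F = G := by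
  obtain ⟨Fo, Fm⟩ := F; obtain ⟨Go, Gm⟩ := G
  obtain rfl : Fo = Go := funext hobj
  have : @Fm = @Gm := by
    funext x y e
    exact eq_of_heq (hmap x y e)
  rw [this]

/-- The walking-arrow quiver structure on `ULift Bool`. -/
instance arrowQuiver : Quiver.{v, u} (ULift.{u} Bool) :=
  ⟨fun x y => ULift.{v} (PLift (x = ⟨false⟩ ∧ y = ⟨true⟩))⟩

/-- The unique edge of the walking arrow. -/
def theEdge : (⟨false⟩ : ULift.{u} Bool) ⟶ (⟨true⟩ : ULift.{u} Bool) := ⟨⟨⟨rfl, rfl⟩⟩⟩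

/-- The walking arrow quiver as an object of `Quiv`. -/
def ArrowQ : Quiv.{v, u} := Quiv.of (ULift.{u} Bool)

/-- The prefunctor from the walking arrow classifying an edge. -/
def arrowHom {W : Type u} [Quiver.{v} W] {w0 w1 : W} (f : w0 ⟶ w1) :
    Prefunctor (ULift.{u} Bool) W where
  obj x := bif x.down then w1 else w0
  map {x y} e :=
    f.cast (show w0 = _ by rw [e.down.down.1]; rfl) (show w1 = _ by rw [e.down.down.2]; rfl)

lemma arrowHom_comp {W X : Type u} [Quiver.{v} W] [Quiver.{v} X] {w0 w1 : W}
    (f : w0 ⟶ w1) (ρ : Prefunctor W X) :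
    (arrowHom f).comp ρ = arrowHom (ρ.map f) := by
  refine prefunctorExtHEq (fun x => by cases x with | up d => cases d <;> rfl) ?_
  intro x y e
  obtain ⟨⟨⟨h0, h1⟩⟩⟩ := e
  subst h0; subst h1
  rfl

/-- **Characterization of strongly cartesian morphisms of quivers over the vertex functor.**
A morphism `φ : G ⟶ H` of quivers is strongly cartesian with respect to the vertex functor
`V : Quiv ⥤ Type`, lying over its own vertex map, if and only if all of its edge maps
`φ.map : (a ⟶ b) → (φ.obj a ⟶ φ.obj b)` are bijections. -/
theorem Quiv.isStronglyCartesian_iff {G H : Quiv.{v, u}} (φ : G ⟶ H) :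
    Quiv.vertexFunctor.IsStronglyCartesian (Quiv.vertexFunctor.map φ) φ ↔
      ∀ a b : G, Function.Bijective (fun e : a ⟶ b => φ.map e) := by
  set p := Quiv.vertexFunctor.{v, u} with hp
  constructor
  · intro h a b
    haveI := h
    constructor
    · -- injectivity
      intro e e' hee
      let Ae : ArrowQ.{v, u} ⟶ G := arrowHom e
      let Ae' : ArrowQ.{v, u} ⟶ G := arrowHom e'
      have hup := Functor.IsStronglyCartesian.universal_property (p := p)
        (p.map φ) φ (R' := p.obj ArrowQ.{v, u}) (a' := ArrowQ.{v, u})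
        (p.map Ae) _ rfl (Ae ≫ φ)
      obtain ⟨χ, _, huniq⟩ := hup
      have h1 : Ae = χ := huniq Ae ⟨inferInstance, rfl⟩
      have h2 : Ae' = χ := by
        apply huniq
        constructor
        · show p.IsHomLift (p.map Ae) Ae'
          have : p.map Ae = p.map Ae' := rfl
          rw [this]; infer_instance
        · show (arrowHom e').comp φ = (arrowHom e).comp φ
          rw [arrowHom_comp, arrowHom_comp]
          exact (congrArg arrowHom hee).symm
      have h3 : Ae = Ae' := h1.trans h2.symm
      have h4 : HEq (Ae.map theEdge) (Ae'.map theEdge) := by rw [h3]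
      exact eq_of_heq h4
    · -- surjectivity
      intro f
      let ψ : ArrowQ.{v, u} ⟶ H := arrowHom f
      set g : (ULift.{u} Bool) → G := fun x => bif x.down then b else a with hg
      have hcomm : (TypeCat.ofHom g ≫ p.map φ : p.obj ArrowQ.{v, u} ⟶ p.obj H) = p.map ψ := by
        ext x; cases x with | up d => cases d <;> rfl
      haveI : p.IsHomLift ((TypeCat.ofHom g : p.obj ArrowQ.{v,u} ⟶ p.obj G) ≫ p.map φ) ψ := by
        exact cast (congrArg (fun f : p.obj ArrowQ.{v,u} ⟶ p.obj H => p.IsHomLift f ψ) hcomm.symm) inferInstance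
      have hup := Functor.IsStronglyCartesian.universal_property (p := p)
        (p.map φ) φ (R' := p.obj ArrowQ.{v, u}) (a' := ArrowQ.{v, u}) (TypeCat.ofHom g : p.obj ArrowQ.{v,u} ⟶ p.obj G) _ rfl ψ
      obtain ⟨χ, ⟨hlift, hfac⟩, _⟩ := hup
      have hge : (TypeCat.ofHom g : p.obj ArrowQ.{v,u} ⟶ p.obj G) = p.map χ := CategoryTheory.IsHomLift.eq_of_isHomLift p (a := ArrowQ.{v, u}) (b := G) (TypeCat.ofHom g : p.obj ArrowQ.{v,u} ⟶ p.obj G) χ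
      have hA : χ.obj ⟨false⟩ = a := (congrArg (fun f => f ⟨false⟩) hge).symm
      have hB : χ.obj ⟨true⟩ = b := (congrArg (fun f => f ⟨true⟩) hge).symm
      refine ⟨(χ.map theEdge).cast hA hB, ?_⟩
      have hmapEq : HEq ((χ ≫ φ).map theEdge) (ψ.map theEdge) := by rw [hfac]
      show φ.map ((χ.map theEdge).cast hA hB) = f
      have : φ.map ((χ.map theEdge).cast hA hB)
          = (φ.map (χ.map theEdge)).cast (congrArg φ.obj hA) (congrArg φ.obj hB) := by
        cases hA; cases hB; rfl
      rw [this, Hom.cast_eq_iff_heq]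
      exact hmapEq
  · intro hbij
    refine { toIsHomLift := inferInstance, universal_property' := ?_ }
    intro K g ψ hinst
    obtain ⟨⟨g⟩⟩ := g
    have hcomm : (TypeCat.ofHom g ≫ p.map φ) = p.map ψ :=
      CategoryTheory.IsHomLift.eq_of_isHomLift p _ ψ
    have hc : ∀ x : (K : Type u), (ψ.obj x : (H : Type u)) = φ.obj (g x) :=
      fun x => (congrArg (fun f : p.obj K ⟶ p.obj H => f x) hcomm).symm
    let eqv : ∀ x y : G, (x ⟶ y) ≃ (φ.obj x ⟶ φ.obj y) := fun x y =>
      Equiv.ofBijective _ (hbij x y)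
    let χ₀ : K ⟶ G := ⟨g, fun {x y} e => (eqv (g x) (g y)).symm
      ((ψ.map e).cast (hc x) (hc y))⟩
    refine ⟨χ₀, ⟨?_, ?_⟩, ?_⟩
    · have hq : TypeCat.ofHom g = p.map χ₀ := rfl
      exact (show p.IsHomLift (p.map χ₀) χ₀ from inferInstance)
    · refine prefunctorExtHEq
        (fun x => show (χ₀ ≫ φ).obj x = ψ.obj x from (hc x).symm) ?_
      intro x y e
      have : φ.map ((eqv (g x) (g y)).symm ((ψ.map e).cast (hc x) (hc y)))
          = (ψ.map e).cast (hc x) (hc y) :=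
        (eqv (g x) (g y)).apply_symm_apply _
      exact this ▸ Hom.cast_heq _ _ _
    · rintro χ' ⟨hlift', hfac'⟩
      have hge : TypeCat.ofHom g = p.map χ' := CategoryTheory.IsHomLift.eq_of_isHomLift p _ χ'
      have hgeP : ∀ x : (K : Type u), (χ'.obj x : (G : Type u)) = g x :=
        fun x => (congrArg (fun f : p.obj K ⟶ p.obj G => f x) hge).symm
      subst hfac'
      refine prefunctorExtHEq (fun x => hgeP x) ?_
      intro x y e
      have h2 : ∀ (u u' : G) (hu : u = g x) (hv : u' = g y) (w : u ⟶ u'),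
          HEq ((eqv (g x) (g y)).symm ((φ.map w).cast
            (congrArg φ.obj hu) (congrArg φ.obj hv))) w := by
        rintro u u' rfl rfl w
        exact heq_of_eq ((eqv (g x) (g y)).symm_apply_apply w)
      have h1 : (eqv (g x) (g y)).symm (((χ' ≫ φ).map e).cast (hc x) (hc y))
          = (eqv (g x) (g y)).symm ((φ.map (χ'.map e)).cast
            (congrArg φ.obj (hgeP x)) (congrArg φ.obj (hgeP y))) := rfl
      exact ((h2 _ _ (hgeP x) (hgeP y) (χ'.map e)).symm.trans (heq_of_eq h1.symm))
end

section
/- A morphism φ : G ⟶ H in the category of quivers is strongly cocartesian with respect to the vertex functor V : Quiv ⥤ Type (i.e. cocartesian in the sense of Grothendieck opfibrations, lying over its own vertex map) if and only if φ is bijective on edges, i.e. the induced map on total edge sets Σ (a b : vertices of G), (a ⟶ b) → Σ (a' b' : vertices of H), (a' ⟶ b') sending (a, b, e) to (φ.obj a, φ.obj b, φ.map e) is a bijection. -/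
open CategoryTheory

universe v u

private def Quiv.EdgeProp (α : Type u) : Type u := α

private instance {α : Type u} : Quiver.{v} (Quiv.EdgeProp.{u} α) :=
  ⟨fun _ _ => ULift.{v} Prop⟩

private theorem Quiv.prefunctor_hext {V : Type*} {W : Type*} [Quiver V] [Quiver W]
    {F G : Prefunctor V W} (h_obj : ∀ X, F.obj X = G.obj X)
    (h_map : ∀ (X Y : V) (f : X ⟶ Y), HEq (F.map f) (G.map f)) : F = G := by
  obtain ⟨Fo, Fm⟩ := F; obtain ⟨Go, Gm⟩ := G
  obtain rfl : Fo = Go := funext h_obj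
  congr 1
  funext X Y f
  exact eq_of_heq (h_map X Y f)

private def Quiv.homOfEq {V : Type*} [Quiver V] {X Y X' Y' : V} (e : X ⟶ Y)
    (hX : X = X') (hY : Y = Y') : X' ⟶ Y' := hX ▸ hY ▸ e

private theorem Quiv.homOfEq_heq {V : Type*} [Quiver V] {X Y X' Y' : V} (e : X ⟶ Y)
    (hX : X = X') (hY : Y = Y') : HEq (Quiv.homOfEq e hX hY) e := by
  subst hX; subst hY; rfl

private theorem Quiv.map_hcongr {V : Type*} {W : Type*} [Quiver V] [Quiver W]
    (F : Prefunctor V W) {p q : Σ a b : V, a ⟶ b} (h : p = q) :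
    HEq (F.map p.2.2) (F.map q.2.2) := by subst h; rfl

/-- **Characterization of strongly cocartesian morphisms of quivers over the vertex functor.**
A morphism `φ : G ⟶ H` of quivers is strongly cocartesian with respect to the vertex functor
`V : Quiv ⥤ Type`, lying over its own vertex map, if and only if `φ` is bijective on edges,
i.e. the induced map on total edge sets
`Σ (a b : G), (a ⟶ b) → Σ (a' b' : H), (a' ⟶ b')` is a bijection. -/
theorem Quiv.isStronglyCocartesian_iff {G H : Quiv.{v, u}} (φ : G ⟶ H) :
    Quiv.vertexFunctor.IsStronglyCocartesian (Quiv.vertexFunctor.map φ) φ ↔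
      Function.Bijective
        (fun p : Σ a b : G, a ⟶ b =>
          (⟨φ.obj p.1, φ.obj p.2.1, φ.map p.2.2⟩ : Σ a' b' : H, a' ⟶ b')) := by
  constructor
  · intro h
    constructor
    · -- injectivity
      rintro ⟨a₁, b₁, e₁⟩ ⟨a₂, b₂, e₂⟩ h12
      let K : Quiv.{v, u} := Quiv.of (Quiv.EdgeProp.{u} (H : Type u))
      let g : Quiv.vertexFunctor.obj H ⟶ Quiv.vertexFunctor.obj K := TypeCat.ofHom fun x => x
      let ψ : G ⟶ K :=
        { obj := fun a => (φ.obj a : Quiv.EdgeProp.{u} (H : Type u))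
          map := fun {a b} e =>
            ⟨(⟨a, b, e⟩ : Σ a b : (G : Type u), a ⟶ b) = ⟨a₁, b₁, e₁⟩⟩ }
      haveI : Quiv.vertexFunctor.IsHomLift (Quiv.vertexFunctor.map φ ≫ g) ψ :=
        show Quiv.vertexFunctor.IsHomLift (Quiv.vertexFunctor.map ψ) ψ from inferInstance
      obtain ⟨χ, ⟨hl, hc⟩, hu⟩ := h.universal_property' (b' := K) g ψ
      have hm : ∀ (a b : (G : Type u)) (e : a ⟶ b), HEq ((φ ≫ χ).map e) (ψ.map e) := by
        rw [hc]; exact fun _ _ _ => HEq.rfl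
      let F : (Σ x y : (H : Type u), x ⟶ y) → Prop := fun q => (χ.map q.2.2).down
      have hF : ∀ (a b : (G : Type u)) (e : a ⟶ b),
          F ⟨φ.obj a, φ.obj b, φ.map e⟩ =
            ((⟨a, b, e⟩ : Σ a b : (G : Type u), a ⟶ b) = ⟨a₁, b₁, e₁⟩) :=
        fun a b e => congrArg ULift.down (eq_of_heq (hm a b e))
      have key := (hF a₁ b₁ e₁) ▸ (hF a₂ b₂ e₂) ▸ congrArg F h12
      exact (cast key rfl).symm
    · -- surjectivity
      intro q
      let K : Quiv.{v, u} := Quiv.of (Quiv.EdgeProp.{u} (H : Type u))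
      let g : Quiv.vertexFunctor.obj H ⟶ Quiv.vertexFunctor.obj K := TypeCat.ofHom fun x => x
      let ψ : G ⟶ K :=
        { obj := fun a => (φ.obj a : Quiv.EdgeProp.{u} (H : Type u))
          map := fun {a b} _ => ⟨True⟩ }
      haveI : Quiv.vertexFunctor.IsHomLift (Quiv.vertexFunctor.map φ ≫ g) ψ :=
        show Quiv.vertexFunctor.IsHomLift (Quiv.vertexFunctor.map ψ) ψ from inferInstance
      obtain ⟨χ, _, hu⟩ := h.universal_property' (b' := K) g ψ
      let χ₁ : H ⟶ K :=
        { obj := fun x => (x : Quiv.EdgeProp.{u} (H : Type u))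
          map := fun {x y} _ => ⟨True⟩ }
      let χ₂ : H ⟶ K :=
        { obj := fun x => (x : Quiv.EdgeProp.{u} (H : Type u))
          map := fun {x y} e =>
            ⟨∃ p : Σ a b : (G : Type u), a ⟶ b,
              (⟨φ.obj p.1, φ.obj p.2.1, φ.map p.2.2⟩ : Σ x y : (H : Type u), x ⟶ y)
                = ⟨x, y, e⟩⟩ }
      have i1 : Quiv.vertexFunctor.IsHomLift g χ₁ :=
        show Quiv.vertexFunctor.IsHomLift (Quiv.vertexFunctor.map χ₁) χ₁ from inferInstance
      have i2 : Quiv.vertexFunctor.IsHomLift g χ₂ :=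
        show Quiv.vertexFunctor.IsHomLift (Quiv.vertexFunctor.map χ₂) χ₂ from inferInstance
      have c1 : φ ≫ χ₁ = ψ :=
        Quiv.prefunctor_hext (fun _ => rfl) (fun _ _ _ => HEq.rfl)
      have c2 : φ ≫ χ₂ = ψ :=
        Quiv.prefunctor_hext (fun _ => rfl)
          (fun a b e => heq_of_eq (congrArg ULift.up (eq_true ⟨⟨a, b, e⟩, rfl⟩)))
      have h12 : χ₁ = χ₂ := (hu χ₁ ⟨i1, c1⟩).trans (hu χ₂ ⟨i2, c2⟩).symm
      have hT : (χ₁.map q.2.2).down = (χ₂.map q.2.2).down := by rw [h12]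
      have h3 : True = (∃ p : Σ a b : (G : Type u), a ⟶ b,
          (⟨φ.obj p.1, φ.obj p.2.1, φ.map p.2.2⟩ : Σ x y : (H : Type u), x ⟶ y) = q) := hT
      exact cast h3 trivial
  · intro hb
    refine { toIsHomLift := inferInstance, universal_property' := ?_ }
    intro K g ψ hinst
    haveI := hinst
    have hψ : Quiv.vertexFunctor.map φ ≫ g = Quiv.vertexFunctor.map ψ :=
      CategoryTheory.IsHomLift.eq_of_isHomLift Quiv.vertexFunctor (Quiv.vertexFunctor.map φ ≫ g) ψ
    have hg : ∀ a : (G : Type u), g (φ.obj a) = ψ.obj a := fun a => types_congr_hom hψ a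
    let eqv := Equiv.ofBijective _ hb
    have hsv : ∀ q : Σ x y : (H : Type u), x ⟶ y,
        (⟨φ.obj (eqv.symm q).1, φ.obj (eqv.symm q).2.1, φ.map (eqv.symm q).2.2⟩
          : Σ x y : (H : Type u), x ⟶ y) = q := fun q => eqv.apply_symm_apply q
    have h1 : ∀ q : Σ x y : (H : Type u), x ⟶ y, ψ.obj (eqv.symm q).1 = g q.1 := fun q =>
      (hg _).symm.trans (congrArg g (congrArg Sigma.fst (hsv q)))
    have h2 : ∀ q : Σ x y : (H : Type u), x ⟶ y, ψ.obj (eqv.symm q).2.1 = g q.2.1 := fun q =>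
      (hg _).symm.trans (congrArg g (congrArg (fun r : Σ x y : (H : Type u), x ⟶ y => r.2.1)
        (hsv q)))
    let χ : H ⟶ K :=
      { obj := g
        map := fun {x y} e =>
          Quiv.homOfEq (ψ.map (eqv.symm ⟨x, y, e⟩).2.2) (h1 ⟨x, y, e⟩) (h2 ⟨x, y, e⟩) }
    have hlχ : Quiv.vertexFunctor.IsHomLift g χ :=
      show Quiv.vertexFunctor.IsHomLift (Quiv.vertexFunctor.map χ) χ from inferInstance
    have hcχ : φ ≫ χ = ψ := by
      apply Quiv.prefunctor_hext
      · exact hg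
      · intro a b e
        refine HEq.trans (Quiv.homOfEq_heq _ _ _) ?_
        exact Quiv.map_hcongr ψ (eqv.symm_apply_apply ⟨a, b, e⟩)
    refine ⟨χ, ⟨hlχ, hcχ⟩, ?_⟩
    rintro χ' ⟨hl', hc'⟩
    haveI := hl'
    apply Quiv.prefunctor_hext
    · intro x
      have hχ' : g = Quiv.vertexFunctor.map χ' :=
        CategoryTheory.IsHomLift.eq_of_isHomLift Quiv.vertexFunctor g χ'
      exact (types_congr_hom hχ' x).symm
    · suffices hAll : ∀ q : Σ x y : (H : Type u), x ⟶ y,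
          HEq (χ'.map q.2.2) (χ.map q.2.2) by
        intro x y e; exact hAll ⟨x, y, e⟩
      intro q
      obtain ⟨p₀, rfl⟩ := hb.surjective q
      have A : ∀ (κ : H ⟶ K), φ ≫ κ = ψ → HEq (κ.map (φ.map p₀.2.2)) (ψ.map p₀.2.2) := by
        intro κ hκ
        rw [← hκ]
        exact HEq.rfl
      exact (A χ' hc').trans (A χ hcχ).symm
end
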